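/- Fix T > 0 and let R : [0,T) × (0,∞) → (0,∞) be a positive function that is seven times continuously differentiable in x. Then the following two statements are equivalent: (a) there exist constants K_j > 0, 0 ≤ j ≤ 6, such that |R(t,x)^j ∂_x^{(j+1)} R(t,x)| ≤ K_j for all (t,x) ∈ [0,T) × (0,∞); (b) there exist constants K̃_j > 0, 1 ≤ j ≤ 7, such that |∂_x^{(j)}(R^j)(t,x)| ≤ K̃_j for all (t,x) ∈ [0,T) × (0,∞). -/

import Mathlib

open Set

namespace RiskTolAux

/-- All ways to increment one entry of a list. -/
def incr : List ℕ → List (List ℕ)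
  | [] => []
  | a :: L => ((a + 1) :: L) :: (incr L).map (a :: ·)

lemma incr_length (L : List ℕ) : (incr L).length = L.length := by
  induction L with
  | nil => rfl
  | cons a L ih => simp [incr, ih]

lemma mem_incr_length {L L' : List ℕ} (h : L' ∈ incr L) : L'.length = L.length := by
  induction L generalizing L' with
  | nil => simp [incr] at h
  | cons a L ih =>
    simp only [incr, List.mem_cons, List.mem_map] at h
    rcases h with rfl | ⟨M, hM, rfl⟩
    · simp
    · simp [ih hM]

lemma mem_incr_sum {L L' : List ℕ} (h : L' ∈ incr L) : L'.sum = L.sum + 1 := by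
  induction L generalizing L' with
  | nil => simp [incr] at h
  | cons a L ih =>
    simp only [incr, List.mem_cons, List.mem_map] at h
    rcases h with rfl | ⟨M, hM, rfl⟩
    · simp only [List.sum_cons]; omega
    · simp only [List.sum_cons, ih hM]; omega

lemma mem_incr_pos {L L' : List ℕ} (h : L' ∈ incr L) (hL : ∀ a ∈ L, 1 ≤ a) :
    ∀ a ∈ L', 1 ≤ a := by
  induction L generalizing L' with
  | nil => simp [incr] at h
  | cons a L ih =>
    simp only [incr, List.mem_cons, List.mem_map] at h
    rcases h with rfl | ⟨M, hM, rfl⟩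
    · intro b hb
      rcases List.mem_cons.mp hb with rfl | hb
      · omega
      · exact hL b (List.mem_cons_of_mem _ hb)
    · intro b hb
      rcases List.mem_cons.mp hb with rfl | hb
      · exact hL b (List.mem_cons_self)
      · exact ih hM (fun c hc => hL c (List.mem_cons_of_mem _ hc)) b hb

lemma mem_incr_singleton {k : ℕ} {L : List ℕ} (h : [k + 1] ∈ incr L) : L = [k] := by
  have hlen : L.length = 1 := by simpa using (mem_incr_length h).symm
  obtain ⟨a, rfl⟩ := List.length_eq_one_iff.mp hlen
  simp only [incr, List.mem_cons, List.mem_map] at h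
  rcases h with h | ⟨M, hM, hMe⟩
  · have : a = k := by simpa using congrArg (fun l => l.headI) h.symm
    rw [this]
  · simp [incr] at hM


noncomputable def mono (f : ℝ → ℝ) (n : ℕ) (L : List ℕ) (x : ℝ) : ℝ :=
  f x ^ (n - L.length) * (L.map fun a => iteratedDeriv a f x).prod

def step (n : ℕ) (L : List ℕ) : Multiset (List ℕ) :=
  Multiset.replicate (n - L.length) (1 :: L) + (incr L : Multiset (List ℕ))

def expand (n : ℕ) : ℕ → Multiset (List ℕ)
  | 0 => {[]}
  | k + 1 => (expand n k).bind (step n)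

lemma mem_step {n : ℕ} {L L' : List ℕ} (h : L' ∈ step n L) :
    (L.length < n ∧ L' = 1 :: L) ∨ L' ∈ incr L := by
  simp only [step, Multiset.mem_add, Multiset.mem_replicate, Multiset.mem_coe] at h
  rcases h with ⟨h1, h2⟩ | h
  · exact Or.inl ⟨by omega, h2⟩
  · exact Or.inr h

lemma mem_expand {n k : ℕ} {L : List ℕ} (h : L ∈ expand n k) :
    (∀ a ∈ L, 1 ≤ a) ∧ L.length ≤ n ∧ L.sum = k := by
  induction k generalizing L with
  | zero =>
    simp only [expand, Multiset.mem_singleton] at h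
    subst h; simp
  | succ k ih =>
    simp only [expand, Multiset.mem_bind] at h
    obtain ⟨M, hM, hL⟩ := h
    obtain ⟨h1, h2, h3⟩ := ih hM
    rcases mem_step hL with ⟨hlt, rfl⟩ | hmem
    · refine ⟨?_, by simpa using hlt, by simp [h3]; omega⟩
      intro a ha
      rcases List.mem_cons.mp ha with rfl | ha
      · omega
      · exact h1 a ha
    · exact ⟨mem_incr_pos hmem h1, (mem_incr_length hmem) ▸ h2,
        by rw [mem_incr_sum hmem, h3]⟩

lemma card_step {n : ℕ} {L : List ℕ} (h : L.length ≤ n) :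
    Multiset.card (step n L) = n := by
  simp only [step, Multiset.card_add, Multiset.card_replicate, Multiset.coe_card, incr_length]
  omega

lemma card_expand {n : ℕ} (hn : n ≤ 7) (k : ℕ) :
    Multiset.card (expand n k) ≤ 7 ^ k := by
  induction k with
  | zero => simp [expand]
  | succ k ih =>
    rw [show expand n (k+1) = (expand n k).bind (step n) from rfl, Multiset.card_bind]
    have hb : ∀ c ∈ (expand n k).map (Multiset.card ∘ step n), c ≤ 7 := by
      intro c hc
      obtain ⟨L, hL, rfl⟩ := Multiset.mem_map.mp hc
      have h2 := (mem_expand hL).2.1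
      simp only [Function.comp_apply, card_step h2]
      exact hn
    calc ((expand n k).map (Multiset.card ∘ step n)).sum
        ≤ Multiset.card ((expand n k).map (Multiset.card ∘ step n)) • 7 :=
          Multiset.sum_le_card_nsmul _ _ hb
      _ = Multiset.card (expand n k) * 7 := by rw [Multiset.card_map]; rw [smul_eq_mul]
      _ ≤ 7 ^ k * 7 := Nat.mul_le_mul_right 7 ih
      _ = 7 ^ (k + 1) := by rw [pow_succ]

lemma sum_map_indicator (s : Multiset (List ℕ)) (v : List ℕ) :
    (s.map fun L => if L = v then 1 else 0).sum = s.count v := by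
  induction s using Multiset.induction_on with
  | empty => simp
  | cons a s ih =>
    by_cases h : a = v
    · simp [h, ih, Multiset.count_cons, add_comm]
    · simp [h, ih, Multiset.count_cons, Ne.symm h]

lemma count_step {n k : ℕ} (hk : 1 ≤ k) (L : List ℕ) :
    (step n L).count [k + 1] = if L = [k] then 1 else 0 := by
  rw [step, Multiset.count_add, Multiset.count_replicate]
  rw [if_neg (by intro h; have := congrArg List.headI h; simp at this; omega)]
  rw [Multiset.coe_count]
  by_cases h : L = [k]
  · subst h
    simp [incr]
  · rw [if_neg h, zero_add]
    have : [k + 1] ∉ incr L := fun hmem => h (mem_incr_singleton hmem)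
    simpa [List.count_eq_zero] using this

lemma count_expand {n k : ℕ} (hk : 1 ≤ k) : (expand n k).count [k] = n := by
  induction k with
  | zero => omega
  | succ k ih =>
    by_cases hk0 : k = 0
    · subst hk0
      show ((expand n 0).bind (step n)).count [1] = n
      rw [show expand n 0 = {[]} from rfl, Multiset.singleton_bind]
      simp [step, incr, Multiset.count_replicate]
    · have hk1 : 1 ≤ k := by omega
      rw [show expand n (k+1) = (expand n k).bind (step n) from rfl, Multiset.count_bind]
      rw [Multiset.map_congr rfl (fun L _ => count_step hk1 L)]
      rw [sum_map_indicator]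
      exact ih hk1


lemma keyDiff {f : ℝ → ℝ} (hf : ContDiffOn ℝ 7 f (Ioi 0)) {a : ℕ} (ha : a ≤ 6) {x : ℝ}
    (hx : x ∈ Ioi (0 : ℝ)) :
    HasDerivAt (iteratedDeriv a f) (iteratedDeriv (a + 1) f x) x := by
  have hu : UniqueDiffOn ℝ (Ioi (0 : ℝ)) := isOpen_Ioi.uniqueDiffOn
  have heq : ∀ y ∈ Ioi (0 : ℝ), iteratedDerivWithin a f (Ioi 0) y = iteratedDeriv a f y := by
    intro y hy
    rw [iteratedDerivWithin_eq_iteratedFDerivWithin, iteratedDeriv_eq_iteratedFDeriv,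
      iteratedFDerivWithin_of_isOpen a isOpen_Ioi hy]
  have hdw : DifferentiableWithinAt ℝ (iteratedDerivWithin a f (Ioi 0)) (Ioi 0) x :=
    hf.differentiableOn_iteratedDerivWithin (by exact_mod_cast (by omega : a < 7)) hu x hx
  have hda : DifferentiableAt ℝ (iteratedDerivWithin a f (Ioi 0)) x :=
    hdw.differentiableAt (isOpen_Ioi.mem_nhds hx)
  have hev : iteratedDerivWithin a f (Ioi 0) =ᶠ[nhds x] iteratedDeriv a f :=
    Filter.eventuallyEq_of_mem (isOpen_Ioi.mem_nhds hx) heq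
  have hda' : DifferentiableAt ℝ (iteratedDeriv a f) x := hda.congr_of_eventuallyEq hev.symm
  have h := hda'.hasDerivAt
  rw [iteratedDeriv_succ]
  exact h

lemma list_sum_map_mul_left {α : Type*} (l : List α) (F : α → ℝ) (c : ℝ) :
    (l.map fun i => c * F i).sum = c * (l.map F).sum := by
  induction l with
  | nil => simp
  | cons a l ih => simp [ih, mul_add]

lemma hasDerivAt_multiset_sum {ι : Type*} {x : ℝ} (s : Multiset ι) (F : ι → ℝ → ℝ) (d : ι → ℝ) :
    (∀ i ∈ s, HasDerivAt (F i) (d i) x) →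
      HasDerivAt (fun y => (s.map fun i => F i y).sum) ((s.map d).sum) x := by
  induction s using Multiset.induction_on with
  | empty => intro _; simpa using hasDerivAt_const x (0 : ℝ)
  | cons a s ih =>
    intro h
    simp only [Multiset.map_cons, Multiset.sum_cons]
    exact (h a (Multiset.mem_cons_self a s)).add
      (ih fun i hi => h i (Multiset.mem_cons_of_mem hi))

lemma hasDerivAt_listprod {f : ℝ → ℝ} {x : ℝ}
    (hD : ∀ a : ℕ, a ≤ 6 → HasDerivAt (iteratedDeriv a f) (iteratedDeriv (a + 1) f x) x) :
    ∀ L : List ℕ, (∀ a ∈ L, a ≤ 6) →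
      HasDerivAt (fun y => (L.map fun a => iteratedDeriv a f y).prod)
        (((incr L).map fun L' => (L'.map fun a => iteratedDeriv a f x).prod).sum) x := by
  intro L
  induction L with
  | nil => intro _; simpa [incr] using hasDerivAt_const x (1 : ℝ)
  | cons a L ih =>
    intro hmem
    have ha : a ≤ 6 := hmem a (List.mem_cons_self)
    have h1 := (hD a ha).mul (ih fun b hb => hmem b (List.mem_cons_of_mem _ hb))
    simp only [List.map_cons, List.prod_cons]
    refine h1.congr_deriv (Eq.symm ?_)
    simp only [incr, List.map_cons, List.prod_cons, List.sum_cons, List.map_map]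
    congr 1
    rw [show ((fun L' => ((L'.map fun b => iteratedDeriv b f x).prod)) ∘ (a :: ·)) =
        fun L' => iteratedDeriv a f x * (L'.map fun b => iteratedDeriv b f x).prod from
      funext fun L' => by simp]
    exact list_sum_map_mul_left _ _ _

lemma hasDerivAt_mono {f : ℝ → ℝ} {x : ℝ}
    (hD : ∀ a : ℕ, a ≤ 6 → HasDerivAt (iteratedDeriv a f) (iteratedDeriv (a + 1) f x) x)
    {n : ℕ} {L : List ℕ} (hmem : ∀ a ∈ L, a ≤ 6) :
    HasDerivAt (mono f n L) (((step n L).map fun L' => mono f n L' x).sum) x := by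
  have hf : HasDerivAt f (iteratedDeriv 1 f x) x := by
    have h := hD 0 (by omega)
    rwa [iteratedDeriv_zero] at h
  have hpow := hf.pow (n - L.length)
  have hprod := hasDerivAt_listprod hD L hmem
  have h := hpow.mul hprod
  have hincr : ((incr L : Multiset (List ℕ)).map fun L' => mono f n L' x).sum
      = f x ^ (n - L.length) * ((incr L).map fun L' =>
          (L'.map fun a => iteratedDeriv a f x).prod).sum := by
    rw [Multiset.map_coe, Multiset.sum_coe]
    rw [List.map_congr_left (fun L' hL' => show mono f n L' x
      = f x ^ (n - L.length) * (L'.map fun a => iteratedDeriv a f x).prod by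
        rw [mono, mem_incr_length hL'])]
    rw [← list_sum_map_mul_left]
  have hrepl : mono f n (1 :: L) x
      = f x ^ (n - L.length - 1) * (iteratedDeriv 1 f x
          * (L.map fun a => iteratedDeriv a f x).prod) := by
    rw [mono]
    simp only [List.map_cons, List.prod_cons, List.length_cons]
    rw [Nat.sub_sub]
  rw [step, Multiset.map_add, Multiset.sum_add, Multiset.map_replicate, Multiset.sum_replicate,
    hincr, hrepl, nsmul_eq_mul]
  refine h.congr_deriv (Eq.symm ?_)
  rw [Pi.pow_apply]
  ring

lemma le_sum_of_mem {L : List ℕ} {a : ℕ} (h : a ∈ L) : a ≤ L.sum := by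
  induction L with
  | nil => simp at h
  | cons b L ih =>
    rcases List.mem_cons.mp h with rfl | h
    · simp
    · simp only [List.sum_cons]
      exact le_trans (ih h) (by omega)

lemma expand_sum {f : ℝ → ℝ} (hf : ContDiffOn ℝ 7 f (Ioi 0)) {n : ℕ} (hn : n ≤ 7) :
    ∀ k ≤ n, ∀ x ∈ Ioi (0 : ℝ),
      iteratedDeriv k (fun y => f y ^ n) x = ((expand n k).map fun L => mono f n L x).sum := by
  intro k
  induction k with
  | zero =>
    intro _ x _
    simp [expand, mono]
  | succ k ih =>
    intro hk x hx
    have hkn : k ≤ n := by omega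
    have heq : iteratedDeriv k (fun y => f y ^ n)
        =ᶠ[nhds x] fun y => ((expand n k).map fun L => mono f n L y).sum :=
      Filter.eventuallyEq_of_mem (isOpen_Ioi.mem_nhds hx) fun y hy => ih hkn y hy
    rw [iteratedDeriv_succ, heq.deriv_eq]
    have hD : ∀ a : ℕ, a ≤ 6 → HasDerivAt (iteratedDeriv a f) (iteratedDeriv (a + 1) f x) x :=
      fun a ha => keyDiff hf ha hx
    have hder := hasDerivAt_multiset_sum (expand n k) (fun L y => mono f n L y)
      (fun L => ((step n L).map fun L' => mono f n L' x).sum)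
      (fun L hL => by
        obtain ⟨h1, _, h3⟩ := mem_expand hL
        exact hasDerivAt_mono hD fun a ha => by
          have := le_sum_of_mem ha
          omega)
    rw [hder.deriv]
    rw [show expand n (k + 1) = (expand n k).bind (step n) from rfl, Multiset.map_bind,
      Multiset.sum_bind]

lemma length_le_sum {L : List ℕ} (h1 : ∀ a ∈ L, 1 ≤ a) : L.length ≤ L.sum := by
  induction L with
  | nil => simp
  | cons a L ih =>
    simp only [List.length_cons, List.sum_cons]
    have ha := h1 a (List.mem_cons_self)
    have := ih fun b hb => h1 b (List.mem_cons_of_mem _ hb)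
    omega

lemma mono_eq_prod (f : ℝ → ℝ) (x : ℝ) :
    ∀ L : List ℕ, (∀ a ∈ L, 1 ≤ a) →
      mono f L.sum L x = (L.map fun a => f x ^ (a - 1) * iteratedDeriv a f x).prod := by
  intro L
  induction L with
  | nil => intro _; simp [mono]
  | cons a L ih =>
    intro h1
    have ha : 1 ≤ a := h1 a (List.mem_cons_self)
    have hL : ∀ b ∈ L, 1 ≤ b := fun b hb => h1 b (List.mem_cons_of_mem _ hb)
    have hls := length_le_sum hL
    rw [mono]
    simp only [List.map_cons, List.prod_cons, List.sum_cons, List.length_cons]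
    rw [← ih hL, mono]
    rw [show a + L.sum - (L.length + 1) = (a - 1) + (L.sum - L.length) by omega, pow_add]
    ring

lemma abs_prod_le {g : ℕ → ℝ} {C : ℝ} (hC : 1 ≤ C) :
    ∀ L : List ℕ, (∀ a ∈ L, |g a| ≤ C) → L.length ≤ 7 → |(L.map g).prod| ≤ C ^ 7 := by
  have hC0 : (0 : ℝ) ≤ C := le_trans zero_le_one hC
  have main : ∀ L : List ℕ, (∀ a ∈ L, |g a| ≤ C) → |(L.map g).prod| ≤ C ^ L.length := by
    intro L
    induction L with
    | nil => intro _; simp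
    | cons a L ih =>
      intro h
      simp only [List.map_cons, List.prod_cons, List.length_cons, abs_mul]
      calc |g a| * |(L.map g).prod| ≤ C * C ^ L.length :=
            mul_le_mul (h a (List.mem_cons_self))
              (ih fun b hb => h b (List.mem_cons_of_mem _ hb)) (abs_nonneg _) hC0
        _ = C ^ (L.length + 1) := by rw [pow_succ]; ring
  intro L h hlen
  exact le_trans (main L h) (pow_le_pow_right₀ hC hlen)

lemma abs_multiset_sum_le {ι : Type*} (s : Multiset ι) (F : ι → ℝ) (B : ℝ) (hB : 0 ≤ B) :
    (∀ i ∈ s, |F i| ≤ B) → |(s.map F).sum| ≤ (Multiset.card s : ℝ) * B := by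
  induction s using Multiset.induction_on with
  | empty => intro _; simp
  | cons a s ih =>
    intro h
    simp only [Multiset.map_cons, Multiset.sum_cons, Multiset.card_cons]
    calc |F a + (s.map F).sum| ≤ |F a| + |(s.map F).sum| := abs_add_le _ _
      _ ≤ B + (Multiset.card s : ℝ) * B :=
          add_le_add (h a (Multiset.mem_cons_self a s))
            (ih fun i hi => h i (Multiset.mem_cons_of_mem hi))
      _ = ((Multiset.card s + 1 : ℕ) : ℝ) * B := by push_cast; ring

lemma eq_singleton_of_mem {L : List ℕ} {n : ℕ} (h1 : ∀ b ∈ L, 1 ≤ b) (h2 : L.sum = n)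
    (h3 : n ∈ L) : L = [n] := by
  have hperm : L.Perm (n :: L.erase n) := List.perm_cons_erase h3
  have hsum : L.sum = n + (L.erase n).sum := by rw [hperm.sum_eq]; simp
  have hlen : (L.erase n).length ≤ (L.erase n).sum :=
    length_le_sum fun b hb => h1 b (List.mem_of_mem_erase hb)
  have hnil : L.erase n = [] := by
    have : (L.erase n).length = 0 := by omega
    exact List.length_eq_zero_iff.mp this
  rw [hnil] at hperm
  exact List.perm_singleton.mp hperm

end RiskTolAux


open RiskTolAux in
/-- Equivalence of the two families of risk-tolerance derivative bounds: bounds on the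
weighted derivatives `Rʲ ∂ₓ⁽ʲ⁺¹⁾R` for `0 ≤ j ≤ 6` hold iff bounds on the derivatives of
powers `∂ₓ⁽ʲ⁾(Rʲ)` for `1 ≤ j ≤ 7` hold, uniformly on `[0,T) × (0,∞)`. -/
theorem risk_tolerance_bounds_equiv (T : ℝ) (hT : 0 < T)
    (R : ℝ → ℝ → ℝ)
    (hpos : ∀ t ∈ Ico (0 : ℝ) T, ∀ x ∈ Ioi (0 : ℝ), 0 < R t x)
    (hC7 : ∀ t ∈ Ico (0 : ℝ) T, ContDiffOn ℝ 7 (R t) (Ioi 0)) :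
    (∃ K : ℕ → ℝ, (∀ j : ℕ, j ≤ 6 → 0 < K j) ∧
        ∀ j : ℕ, j ≤ 6 → ∀ t ∈ Ico (0 : ℝ) T, ∀ x ∈ Ioi (0 : ℝ),
          |(R t x) ^ j * iteratedDeriv (j + 1) (R t) x| ≤ K j) ↔
    (∃ K' : ℕ → ℝ, (∀ j : ℕ, 1 ≤ j → j ≤ 7 → 0 < K' j) ∧
        ∀ j : ℕ, 1 ≤ j → j ≤ 7 → ∀ t ∈ Ico (0 : ℝ) T, ∀ x ∈ Ioi (0 : ℝ),
          |iteratedDeriv j (fun y => (R t y) ^ j) x| ≤ K' j) := by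
  constructor
  · rintro ⟨K, hKpos, hK⟩
    set Kmax : ℝ := 1 + ∑ i ∈ Finset.range 7, K i with hKm
    have hsumnn : (0 : ℝ) ≤ ∑ i ∈ Finset.range 7, K i :=
      Finset.sum_nonneg fun i hi => le_of_lt (hKpos i (by
        have := Finset.mem_range.mp hi; omega))
    have hK1 : 1 ≤ Kmax := by rw [hKm]; linarith
    have hKle : ∀ i : ℕ, i ≤ 6 → K i ≤ Kmax := by
      intro i hi
      have hs : K i ≤ ∑ x ∈ Finset.range 7, K x := Finset.single_le_sum (f := K)
        (fun j hj => le_of_lt (hKpos j (by have := Finset.mem_range.mp hj; omega)))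
        (Finset.mem_range.mpr (by omega))
      rw [hKm]; linarith
    refine ⟨fun _ => 7 ^ 7 * Kmax ^ 7, fun j _ _ => by positivity, ?_⟩
    intro j hj1 hj7 t ht x hx
    have hf := hC7 t ht
    rw [expand_sum hf hj7 j le_rfl x hx]
    have hbound : ∀ L ∈ expand j j, |mono (R t) j L x| ≤ Kmax ^ 7 := by
      intro L hL
      obtain ⟨h1, h2, h3⟩ := mem_expand hL
      rw [show mono (R t) j L x = mono (R t) L.sum L x by rw [h3], mono_eq_prod (R t) x L h1]
      refine abs_prod_le hK1 L ?_ (by omega)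
      intro a ha
      have ha1 : 1 ≤ a := h1 a ha
      have has : a ≤ j := h3 ▸ le_sum_of_mem ha
      have hb := hK (a - 1) (by omega) t ht x hx
      rw [Nat.sub_add_cancel ha1] at hb
      exact le_trans hb (hKle (a - 1) (by omega))
    calc |((expand j j).map fun L => mono (R t) j L x).sum|
        ≤ (Multiset.card (expand j j) : ℝ) * Kmax ^ 7 :=
          abs_multiset_sum_le _ _ _ (by positivity) hbound
      _ ≤ 7 ^ 7 * Kmax ^ 7 := by
          have hc : (Multiset.card (expand j j) : ℝ) ≤ 7 ^ 7 := by
            calc (Multiset.card (expand j j) : ℝ) ≤ ((7 ^ j : ℕ) : ℝ) := by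
                  exact_mod_cast card_expand hj7 j
              _ ≤ ((7 ^ 7 : ℕ) : ℝ) := by
                  exact_mod_cast Nat.pow_le_pow_right (by omega) hj7
              _ = 7 ^ 7 := by push_cast; ring
          have : (0 : ℝ) ≤ Kmax ^ 7 := by positivity
          nlinarith
  · rintro ⟨K', hK'pos, hK'⟩
    have main : ∀ j : ℕ, j ≤ 6 → ∃ C : ℝ, 0 < C ∧ ∀ t ∈ Ico (0 : ℝ) T, ∀ x ∈ Ioi (0 : ℝ),
        |(R t x) ^ j * iteratedDeriv (j + 1) (R t) x| ≤ C := by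
      intro j
      induction j using Nat.strong_induction_on with
      | _ j IH =>
        intro hj
        have hprev : ∀ i : ℕ, ∃ C : ℝ, 0 < C ∧ (i < j → ∀ t ∈ Ico (0 : ℝ) T,
            ∀ x ∈ Ioi (0 : ℝ), |(R t x) ^ i * iteratedDeriv (i + 1) (R t) x| ≤ C) := by
          intro i
          by_cases h : i < j
          · obtain ⟨C, hC, hb⟩ := IH i h (by omega)
            exact ⟨C, hC, fun _ => hb⟩
          · exact ⟨1, one_pos, fun h' => absurd h' h⟩
        choose C hCpos hCb using hprev
        set Cmax : ℝ := 1 + ∑ i ∈ Finset.range 7, C i with hCm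
        have hsumnn : (0 : ℝ) ≤ ∑ i ∈ Finset.range 7, C i :=
          Finset.sum_nonneg fun i _ => le_of_lt (hCpos i)
        have hC1 : 1 ≤ Cmax := by rw [hCm]; linarith
        have hCle : ∀ i : ℕ, i ≤ 6 → C i ≤ Cmax := by
          intro i hi
          have hs : C i ≤ ∑ x ∈ Finset.range 7, C x := Finset.single_le_sum (f := C)
            (fun k _ => le_of_lt (hCpos k)) (Finset.mem_range.mpr (by omega))
          rw [hCm]; linarith
        have hKn := hK'pos (j + 1) (by omega) (by omega)
        have h77 : (0 : ℝ) < 7 ^ 7 * Cmax ^ 7 := by positivity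
        refine ⟨K' (j + 1) + 7 ^ 7 * Cmax ^ 7, by linarith, ?_⟩
        intro t ht x hx
        have hf := hC7 t ht
        have hsum := expand_sum hf (show j + 1 ≤ 7 by omega) (j + 1) le_rfl x hx
        have hcount : (expand (j + 1) (j + 1)).count [j + 1] = j + 1 :=
          count_expand (by omega)
        have hsplit : expand (j + 1) (j + 1) = Multiset.replicate (j + 1) [j + 1]
            + (expand (j + 1) (j + 1)).filter (fun L => ¬ L = [j + 1]) := by
          conv_lhs => rw [← Multiset.filter_add_not (fun L => L = [j + 1])
            (expand (j + 1) (j + 1))]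
          congr 1
          rw [Multiset.filter_eq', hcount]
        rw [hsplit, Multiset.map_add, Multiset.sum_add, Multiset.map_replicate,
          Multiset.sum_replicate, nsmul_eq_mul] at hsum
        have hmono : mono (R t) (j + 1) [j + 1] x
            = (R t x) ^ j * iteratedDeriv (j + 1) (R t) x := by
          rw [mono]; simp
        rw [hmono] at hsum
        set rest := (((expand (j + 1) (j + 1)).filter fun L => ¬ L = [j + 1]).map
          fun L => mono (R t) (j + 1) L x).sum with hrest
        have hrb : |rest| ≤ 7 ^ 7 * Cmax ^ 7 := by
          rw [hrest]
          have hb1 : ∀ L ∈ (expand (j + 1) (j + 1)).filter (fun L => ¬ L = [j + 1]),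
              |mono (R t) (j + 1) L x| ≤ Cmax ^ 7 := by
            intro L hL
            have hLS := Multiset.mem_of_mem_filter hL
            have hne : ¬ L = [j + 1] := (Multiset.mem_filter.mp hL).2
            obtain ⟨h1, h2, h3⟩ := mem_expand hLS
            rw [show mono (R t) (j + 1) L x = mono (R t) L.sum L x by rw [h3],
              mono_eq_prod (R t) x L h1]
            refine abs_prod_le hC1 L ?_ (by omega)
            intro a ha
            have ha1 : 1 ≤ a := h1 a ha
            have han : a ≤ j + 1 := h3 ▸ le_sum_of_mem ha
            have hann : a ≠ j + 1 := fun h => hne (eq_singleton_of_mem h1 h3 (h ▸ ha))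
            have hb := hCb (a - 1) (by omega) t ht x hx
            rw [Nat.sub_add_cancel ha1] at hb
            exact le_trans hb (hCle (a - 1) (by omega))
          calc |(((expand (j + 1) (j + 1)).filter fun L => ¬ L = [j + 1]).map
              fun L => mono (R t) (j + 1) L x).sum|
              ≤ (Multiset.card ((expand (j + 1) (j + 1)).filter fun L => ¬ L = [j + 1]) : ℝ)
                * Cmax ^ 7 := abs_multiset_sum_le _ _ _ (by positivity) hb1
            _ ≤ 7 ^ 7 * Cmax ^ 7 := by
                have hcle : Multiset.card ((expand (j + 1) (j + 1)).filter
                    fun L => ¬ L = [j + 1]) ≤ 7 ^ 7 := by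
                  calc Multiset.card ((expand (j + 1) (j + 1)).filter fun L => ¬ L = [j + 1])
                      ≤ Multiset.card (expand (j + 1) (j + 1)) :=
                        Multiset.card_le_card (Multiset.filter_le _ _)
                    _ ≤ 7 ^ (j + 1) := card_expand (by omega) (j + 1)
                    _ ≤ 7 ^ 7 := Nat.pow_le_pow_right (by omega) (by omega)
                have hcle' : (Multiset.card ((expand (j + 1) (j + 1)).filter
                    fun L => ¬ L = [j + 1]) : ℝ) ≤ 7 ^ 7 := by exact_mod_cast hcle
                have : (0 : ℝ) ≤ Cmax ^ 7 := by positivity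
                nlinarith
        have hKb := hK' (j + 1) (by omega) (by omega) t ht x hx
        have key : ((j : ℝ) + 1) * ((R t x) ^ j * iteratedDeriv (j + 1) (R t) x)
            = iteratedDeriv (j + 1) (fun y => R t y ^ (j + 1)) x - rest := by
          rw [hsum]; push_cast; ring
        have habs : ((j : ℝ) + 1) * |(R t x) ^ j * iteratedDeriv (j + 1) (R t) x|
            ≤ K' (j + 1) + 7 ^ 7 * Cmax ^ 7 := by
          have h1 : |((j : ℝ) + 1) * ((R t x) ^ j * iteratedDeriv (j + 1) (R t) x)|
              ≤ K' (j + 1) + 7 ^ 7 * Cmax ^ 7 := by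
            rw [key]
            calc |iteratedDeriv (j + 1) (fun y => R t y ^ (j + 1)) x - rest|
                ≤ |iteratedDeriv (j + 1) (fun y => R t y ^ (j + 1)) x| + |rest| := by
                  have := norm_sub_le (iteratedDeriv (j + 1) (fun y => R t y ^ (j + 1)) x) rest
                  simpa [Real.norm_eq_abs] using this
              _ ≤ K' (j + 1) + 7 ^ 7 * Cmax ^ 7 := add_le_add hKb hrb
          rwa [abs_mul, abs_of_pos (by positivity : (0 : ℝ) < (j : ℝ) + 1)] at h1
        have hj1 : (1 : ℝ) ≤ (j : ℝ) + 1 := by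
          have : (0 : ℝ) ≤ (j : ℝ) := Nat.cast_nonneg j
          linarith
        nlinarith [abs_nonneg ((R t x) ^ j * iteratedDeriv (j + 1) (R t) x)]
    have H : ∀ j : ℕ, ∃ C : ℝ, 0 < C ∧ (j ≤ 6 → ∀ t ∈ Ico (0 : ℝ) T, ∀ x ∈ Ioi (0 : ℝ),
        |(R t x) ^ j * iteratedDeriv (j + 1) (R t) x| ≤ C) := by
      intro j
      by_cases h : j ≤ 6
      · obtain ⟨C, h1, h2⟩ := main j h
        exact ⟨C, h1, fun _ => h2⟩
      · exact ⟨1, one_pos, fun h' => absurd h' h⟩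
    choose K h1 h2 using H
    exact ⟨K, fun j _ => h1 j, fun j hj => h2 j hj⟩
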